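/- Let Θ be an inner function with values in L(E), let Θ̃(z) = Θ(z̄)*, and let τ be the unitary operator from K_Θ onto K_Θ̃ given by (τf)(e^{it}) = e^{-it} Θ(e^{-it})* f(e^{-it}). Then τ* T_Θ̃ τ ⊆ T_Θ: for every bounded operator B ∈ T_Θ̃, the operator τ* B τ on K_Θ belongs to T_Θ. -/

import Mathlib

open MeasureTheory Complex ContinuousLinearMap
open scoped ComplexInnerProductSpace

noncomputable section

/-- The circle `𝕋`, realized as `ℝ / 2πℤ`; the point `t` corresponds to `e^{it}`. -/
abbrev Circle2pi : Type := AddCircle (2 * Real.pi)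

instance : Fact (0 < 2 * Real.pi) := ⟨by positivity⟩

/-- Normalized Haar (arc-length) measure on the circle. -/
abbrev haarCircle2pi : Measure Circle2pi := AddCircle.haarAddCircle

variable {E : Type} [NormedAddCommGroup E] [InnerProductSpace ℂ E] [FiniteDimensional ℂ E]

/-- `Θ`, given by its boundary-value function on the circle, is an inner function: it is
(a.e. strongly) measurable, its boundary values are a.e. unitary operators on `E`, and its
Fourier coefficients of negative index vanish (the latter says exactly that `Θ` is the
boundary-value function of a bounded analytic `L(E)`-valued function on the unit disc,
i.e. an element of `H^∞(L(E))`). -/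
structure IsInner (Θ : Circle2pi → (E →L[ℂ] E)) : Prop where
  meas : AEStronglyMeasurable Θ haarCircle2pi
  unit : ∀ᵐ t ∂haarCircle2pi, Θ t ∈ unitary (E →L[ℂ] E)
  anal : ∀ n : ℤ, n < 0 → fourierCoeff Θ n = 0

/-- Membership in the Hardy space `H²(E)`, viewed as the subspace of `L²(E)` of functions
whose Fourier coefficients of negative index vanish. -/
def MemH2 (f : Lp E 2 haarCircle2pi) : Prop :=
  ∀ n : ℤ, n < 0 → fourierCoeff (⇑f) n = 0

/-- Membership in the model space `K_Θ = H²(E) ⊖ Θ H²(E)`: `f` belongs to `H²(E)` and is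
orthogonal to `Θ H²(E)`. -/
def MemK (Θ : Circle2pi → (E →L[ℂ] E)) (f : Lp E 2 haarCircle2pi) : Prop :=
  MemH2 f ∧ ∀ g : Lp E 2 haarCircle2pi, MemH2 g →
    ∫ t, ⟪f t, Θ t (g t)⟫ ∂haarCircle2pi = 0

/-- The boundary values of `Θ̃(z) = Θ(z̄)*`, namely `Θ̃(e^{it}) = Θ(e^{-it})*`. -/
def tild (Θ : Circle2pi → (E →L[ℂ] E)) : Circle2pi → (E →L[ℂ] E) :=
  fun t => adjoint (Θ (-t))

/-- `τ` is the operator on `L²(E)` given by `(τ f)(e^{it}) = e^{-it} Θ(e^{-it})* f(e^{-it})`. -/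
def IsTau (Θ : Circle2pi → (E →L[ℂ] E))
    (τ : Lp E 2 haarCircle2pi →L[ℂ] Lp E 2 haarCircle2pi) : Prop :=
  ∀ f : Lp E 2 haarCircle2pi,
    (⇑(τ f)) =ᵐ[haarCircle2pi] fun t => fourier (-1) t • (adjoint (Θ (-t))) (f (-t))

/-- `P` is the orthogonal projection of `L²(E)` onto the model space `K_Θ`:
its range lies in `K_Θ`, it fixes `K_Θ`, and `f - P f` is orthogonal to `K_Θ`. -/
def IsProjK (Θ : Circle2pi → (E →L[ℂ] E))
    (P : Lp E 2 haarCircle2pi →L[ℂ] Lp E 2 haarCircle2pi) : Prop :=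
  (∀ f, MemK Θ (P f)) ∧ (∀ f, MemK Θ f → P f = f) ∧
    ∀ f g, MemK Θ g → ⟪f - P f, g⟫ = 0

/-- `S` acts on the model space `K_Θ` as the compressed shift `S_Θ f = P_Θ (z f)`:
for `f ∈ K_Θ`, `S f ∈ K_Θ` and `S f - z f` is orthogonal to `K_Θ`, i.e.
`⟪S f, g⟫ = ⟪z f, g⟫` for all `g ∈ K_Θ`. -/
def IsCompShift (Θ : Circle2pi → (E →L[ℂ] E))
    (S : Lp E 2 haarCircle2pi →L[ℂ] Lp E 2 haarCircle2pi) : Prop :=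
  ∀ f, MemK Θ f → MemK Θ (S f) ∧
    ∀ g, MemK Θ g → ⟪S f, g⟫ = ∫ t, ⟪fourier 1 t • f t, g t⟫ ∂haarCircle2pi

/-- `A` acts on the model space `K_Θ` as the adjoint `S_Θ*` of the compressed shift `S`:
for `f ∈ K_Θ`, `A f ∈ K_Θ` and `⟪A f, g⟫ = ⟪f, S g⟫` for all `g ∈ K_Θ`. -/
def IsCompShiftAdj (Θ : Circle2pi → (E →L[ℂ] E))
    (S A : Lp E 2 haarCircle2pi →L[ℂ] Lp E 2 haarCircle2pi) : Prop :=
  ∀ f, MemK Θ f → MemK Θ (A f) ∧ ∀ g, MemK Θ g → ⟪A f, g⟫ = ⟪f, S g⟫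

/-- The subspace `D = {(I - Θ(z) Θ(0)*) x : x ∈ E}` of `K_Θ`, described through boundary
values; here `Θ(0)` is the 0-th Fourier coefficient of `Θ`. -/
def DSet (Θ : Circle2pi → (E →L[ℂ] E)) : Set (Lp E 2 haarCircle2pi) :=
  {f | ∃ x : E, (⇑f) =ᵐ[haarCircle2pi]
    fun t => x - Θ t (adjoint (fourierCoeff Θ 0) x)}

/-- The subspace `D_* = {(1/z)(Θ(z) - Θ(0)) x : x ∈ E}` of `K_Θ`, described through
boundary values. -/
def DStarSet (Θ : Circle2pi → (E →L[ℂ] E)) : Set (Lp E 2 haarCircle2pi) :=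
  {f | ∃ x : E, (⇑f) =ᵐ[haarCircle2pi]
    fun t => fourier (-1) t • (Θ t x - fourierCoeff Θ 0 x)}

/-- `A` is a matrix-valued truncated Toeplitz operator on `K_Θ`, i.e. `A ∈ T_Θ`: there is a
symbol `Φ ∈ L²(L(E))` such that `A f = P_Θ (Φ f)` for every `f` in
`K_Θ^∞ = K_Θ ∩ H^∞(E)`; the compression is expressed by: `A f ∈ K_Θ` and
`⟪A f, g⟫ = ⟪Φ f, g⟫` for every `g ∈ K_Θ`. -/
def MemTT (Θ : Circle2pi → (E →L[ℂ] E))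
    (A : Lp E 2 haarCircle2pi →L[ℂ] Lp E 2 haarCircle2pi) : Prop :=
  ∃ Φ : Circle2pi → (E →L[ℂ] E), MemLp Φ 2 haarCircle2pi ∧
    ∀ f, MemK Θ f → MemLp (⇑f) ⊤ haarCircle2pi →
      MemK Θ (A f) ∧ ∀ g, MemK Θ g → ⟪A f, g⟫ = ∫ t, ⟪Φ t (f t), g t⟫ ∂haarCircle2pi

open scoped ENNReal

namespace TTAux

variable {Θ : Circle2pi → (E →L[ℂ] E)}

/-! ### Negation on the circle -/

lemma mp_neg : MeasurePreserving (fun t : Circle2pi => -t) haarCircle2pi haarCircle2pi :=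
  Measure.measurePreserving_neg _

lemma integral_comp_neg' {F : Type*} [NormedAddCommGroup F] [NormedSpace ℝ F]
    {G H : Circle2pi → F} (h : ∀ t, H t = G (-t)) :
    ∫ t, H t ∂haarCircle2pi = ∫ t, G t ∂haarCircle2pi := by
  rw [show H = fun t => G (-t) from funext h]
  exact integral_neg_eq_self G _

lemma ae_comp_neg {p : Circle2pi → Prop} (h : ∀ᵐ t ∂haarCircle2pi, p t) :
    ∀ᵐ t ∂haarCircle2pi, p (-t) :=
  ae_of_ae_map mp_neg.measurable.aemeasurable (by rwa [mp_neg.map_eq])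

lemma aesm_comp_neg {F : Type*} [NormedAddCommGroup F] {f : Circle2pi → F}
    (h : AEStronglyMeasurable f haarCircle2pi) :
    AEStronglyMeasurable (fun t => f (-t)) haarCircle2pi :=
  h.comp_quasiMeasurePreserving mp_neg.quasiMeasurePreserving

lemma memLp_comp_neg {F : Type*} [NormedAddCommGroup F] {f : Circle2pi → F} {p : ℝ≥0∞}
    (h : MemLp f p haarCircle2pi) : MemLp (fun t => f (-t)) p haarCircle2pi :=
  h.comp_measurePreserving mp_neg

/-! ### Fourier basics -/

lemma fourier_neg_arg (n : ℤ) (t : Circle2pi) : fourier n (-t) = fourier (-n) t := by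
  simp [fourier_apply]

lemma conj_fourier_mul_self (n : ℤ) (t : Circle2pi) :
    (starRingEnd ℂ) (fourier n t) * fourier n t = 1 := by
  rw [← fourier_neg, ← fourier_add]
  simp [fourier_apply]

lemma fourierCoeff_congr_ae {F : Type} [NormedAddCommGroup F] [NormedSpace ℂ F]
    {f g : Circle2pi → F} (h : f =ᵐ[haarCircle2pi] g) (n : ℤ) :
    fourierCoeff f n = fourierCoeff g n := by
  unfold fourierCoeff
  refine integral_congr_ae (h.mono fun t ht => ?_)
  dsimp only
  rw [ht]

lemma integral_fourier_eq_zero {k : ℤ} (hk : k ≠ 0) :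
    ∫ t, fourier k t ∂haarCircle2pi = 0 :=
  integral_eq_zero_of_add_right_eq_neg (μ := haarCircle2pi)
    (fourier_add_half_inv_index hk (by positivity))

lemma fourierCoeff_fourier_smul (m n : ℤ) (x : E) :
    fourierCoeff (fun t : Circle2pi => fourier m t • x) n = if n = m then x else 0 := by
  unfold fourierCoeff
  have : ∀ t : Circle2pi, fourier (-n) t • fourier m t • x = fourier (m - n) t • x := by
    intro t
    rw [smul_smul, ← fourier_add]
    ring_nf
  simp_rw [this]
  rw [integral_smul_const]
  rcases eq_or_ne n m with h | h
  · subst h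
    simp only [sub_self, fourier_zero]
    rw [integral_const]
    simp
  · rw [integral_fourier_eq_zero (by omega), zero_smul]
    simp [h]

lemma memLp_fourier (k : ℤ) :
    MemLp (fun t : Circle2pi => (fourier k t : ℂ)) ⊤ haarCircle2pi := by
  refine memLp_top_of_bound ((fourier k).continuous.aestronglyMeasurable) 1 ?_
  filter_upwards with t
  simp [Circle.norm_coe]

lemma integrable_fourier_smul (k : ℤ) (u : Lp E 2 haarCircle2pi) :
    Integrable (fun t => fourier k t • u t) haarCircle2pi :=
  ((MeasureTheory.Lp.memLp u).integrable (by norm_num)).smul_of_top_right (memLp_fourier k)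

/-! ### Monomials in `L²` -/

lemma memLp_fourier_smul (m : ℤ) (x : E) (p : ℝ≥0∞) :
    MemLp (fun t : Circle2pi => fourier m t • x) p haarCircle2pi := by
  have htop : MemLp (fun t : Circle2pi => fourier m t • x) ⊤ haarCircle2pi := by
    refine memLp_top_of_bound
      (((fourier m).continuous.smul continuous_const).aestronglyMeasurable) ‖x‖ ?_
    filter_upwards with t
    rw [norm_smul]
    simp [Circle.norm_coe]
  exact htop.mono_exponent le_top

def mono (m : ℤ) (x : E) : Lp E 2 haarCircle2pi := (memLp_fourier_smul m x 2).toLp _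

lemma mono_coe (m : ℤ) (x : E) :
    ⇑(mono m x) =ᵐ[haarCircle2pi] fun t => fourier m t • x :=
  (memLp_fourier_smul m x 2).coeFn_toLp

lemma memH2_mono {m : ℤ} (hm : 0 ≤ m) (x : E) : MemH2 (mono m x) := by
  intro n hn
  rw [fourierCoeff_congr_ae (mono_coe m x), fourierCoeff_fourier_smul]
  simp [show n ≠ m by omega]

/-! ### Parseval-type orthogonality -/

lemma fourierCoeff_inner_basis (u : Lp E 2 haarCircle2pi) (x : E) (n : ℤ) :
    fourierCoeff (fun t => (⟪x, u t⟫ : ℂ)) n = ⟪x, fourierCoeff (⇑u) n⟫ := by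
  unfold fourierCoeff
  rw [← integral_inner (integrable_fourier_smul (-n) u)]
  congr 1
  ext t
  rw [inner_smul_right]
  simp [smul_eq_mul]

lemma parseval_orth {u v : Lp E 2 haarCircle2pi}
    (h : ∀ n : ℤ, fourierCoeff (⇑u) n = 0 ∨ fourierCoeff (⇑v) n = 0) :
    ∫ t, ⟪u t, v t⟫ ∂haarCircle2pi = 0 := by
  classical
  set b := stdOrthonormalBasis ℂ E with hb
  set U : Fin (Module.finrank ℂ E) → Lp ℂ 2 haarCircle2pi :=
    fun i => (innerSL ℂ (b i)).compLp u with hU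
  set V : Fin (Module.finrank ℂ E) → Lp ℂ 2 haarCircle2pi :=
    fun i => (innerSL ℂ (b i)).compLp v with hV
  have hUc : ∀ i, (⇑(U i)) =ᵐ[haarCircle2pi] fun t => (⟪b i, u t⟫ : ℂ) :=
    fun i => ContinuousLinearMap.coeFn_compLp _ _
  have hVc : ∀ i, (⇑(V i)) =ᵐ[haarCircle2pi] fun t => (⟪b i, v t⟫ : ℂ) :=
    fun i => ContinuousLinearMap.coeFn_compLp _ _
  have key : ∀ i, (⟪U i, V i⟫ : ℂ) = 0 := by
    intro i
    rw [← HilbertBasis.tsum_inner_mul_inner fourierBasis (U i) (V i)]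
    have : ∀ n : ℤ, (⟪U i, fourierBasis n⟫ : ℂ) * ⟪fourierBasis n, V i⟫ = 0 := by
      intro n
      have hu' : (⟪(fourierBasis (T := 2 * Real.pi)) n, U i⟫ : ℂ)
          = ⟪b i, fourierCoeff (⇑u) n⟫ := by
        rw [← HilbertBasis.repr_apply_apply, fourierBasis_repr,
          fourierCoeff_congr_ae (hUc i), fourierCoeff_inner_basis]
      have hv' : (⟪(fourierBasis (T := 2 * Real.pi)) n, V i⟫ : ℂ)
          = ⟪b i, fourierCoeff (⇑v) n⟫ := by
        rw [← HilbertBasis.repr_apply_apply, fourierBasis_repr,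
          fourierCoeff_congr_ae (hVc i), fourierCoeff_inner_basis]
      rcases h n with h0 | h0
      · rw [← inner_conj_symm, hu', h0, inner_zero_right]
        simp
      · rw [hv', h0, inner_zero_right, mul_zero]
    simp only [this, tsum_zero]
  have expand : (fun t => (⟪u t, v t⟫ : ℂ)) =ᵐ[haarCircle2pi]
      fun t => ∑ i, ⟪(U i) t, (V i) t⟫ := by
    filter_upwards [ae_all_iff.2 hUc, ae_all_iff.2 hVc] with t hU' hV'
    rw [← OrthonormalBasis.sum_inner_mul_inner b (u t) (v t)]
    refine Finset.sum_congr rfl fun i _ => ?_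
    rw [hU' i, hV' i, RCLike.inner_apply, inner_conj_symm, mul_comm]
  rw [integral_congr_ae expand, integral_finset_sum]
  · refine Finset.sum_eq_zero fun i _ => ?_
    rw [← MeasureTheory.L2.inner_def, key i]
  · exact fun i _ => MeasureTheory.L2.integrable_inner (U i) (V i)

/-! ### Measurability and boundedness helpers -/

lemma aesm_apply {Θ' : Circle2pi → E →L[ℂ] E} {f : Circle2pi → E}
    (hΘ' : AEStronglyMeasurable Θ' haarCircle2pi) (hf : AEStronglyMeasurable f haarCircle2pi) :
    AEStronglyMeasurable (fun t => Θ' t (f t)) haarCircle2pi :=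
  (ContinuousLinearMap.id ℂ (E →L[ℂ] E)).aestronglyMeasurable_comp₂ hΘ' hf

lemma aesm_adjoint {Θ' : Circle2pi → E →L[ℂ] E}
    (h : AEStronglyMeasurable Θ' haarCircle2pi) :
    AEStronglyMeasurable (fun t => adjoint (Θ' t)) haarCircle2pi :=
  (ContinuousLinearMap.adjoint :
    (E →L[ℂ] E) ≃ₗᵢ⋆[ℂ] (E →L[ℂ] E)).continuous.comp_aestronglyMeasurable h

lemma adjoint_mem_unitary {U : E →L[ℂ] E} (hU : U ∈ unitary (E →L[ℂ] E)) :
    adjoint U ∈ unitary (E →L[ℂ] E) := by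
  rw [← ContinuousLinearMap.star_eq_adjoint]
  exact Unitary.star_mem hU

lemma memLp_apply_unitary {Θ' : Circle2pi → E →L[ℂ] E}
    (hm : AEStronglyMeasurable Θ' haarCircle2pi)
    (hu : ∀ᵐ t ∂haarCircle2pi, Θ' t ∈ unitary (E →L[ℂ] E))
    {f : Circle2pi → E} {p : ℝ≥0∞} (hf : MemLp f p haarCircle2pi) :
    MemLp (fun t => Θ' t (f t)) p haarCircle2pi := by
  refine MemLp.of_le hf (aesm_apply hm hf.1) ?_
  filter_upwards [hu] with t ht
  rw [ContinuousLinearMap.norm_map_of_mem_unitary ht]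

/-! ### Properties of `tild` -/

lemma tild_tild (Θ : Circle2pi → (E →L[ℂ] E)) : tild (tild Θ) = Θ := by
  funext t
  simp [tild, neg_neg, adjoint_adjoint]

lemma isInner_tild (hΘ : IsInner Θ) : IsInner (tild Θ) := by
  constructor
  · exact aesm_adjoint (aesm_comp_neg hΘ.meas)
  · filter_upwards [ae_comp_neg hΘ.unit] with t ht
    exact adjoint_mem_unitary ht
  · intro n hn
    have h1 : fourierCoeff (tild Θ) n
        = ∫ t, star (fourier (-n) t • Θ t) ∂haarCircle2pi := by
      unfold fourierCoeff
      refine integral_comp_neg' (G := fun s => star (fourier (-n) s • Θ s)) fun t => ?_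
      show fourier (-n) t • tild Θ t = star (fourier (-n) (-t) • Θ (-t))
      simp only [star_smul, tild, ContinuousLinearMap.star_eq_adjoint, fourier_neg_arg,
        neg_neg, RCLike.star_def, ← fourier_neg]
    have h2 : ∫ t, star (fourier (-n) t • Θ t) ∂haarCircle2pi
        = star (∫ t, fourier (-n) t • Θ t ∂haarCircle2pi) := by
      have := (starL' ℝ : (E →L[ℂ] E) ≃L[ℝ] (E →L[ℂ] E)).integral_comp_comm
        (fun t => fourier (-n) t • Θ t) (μ := haarCircle2pi)
      simpa using this
    have h3 := hΘ.anal n hn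
    unfold fourierCoeff at h3
    rw [h1, h2, h3, star_zero]

/-! ### The key lemma: `τ`-type maps send `K_Θ` into `K_{Θ̃}` -/

lemma ae_unitary_neg (hΘ : IsInner Θ) :
    ∀ᵐ t ∂haarCircle2pi, Θ (-t) ∈ unitary (E →L[ℂ] E) :=
  ae_comp_neg (p := fun t => Θ t ∈ unitary (E →L[ℂ] E)) hΘ.unit

lemma coeff_vanish (hΘ : IsInner Θ) {f F : Lp E 2 haarCircle2pi} (hf : MemK Θ f)
    (hF : (⇑F) =ᵐ[haarCircle2pi] fun t => fourier (-1) t • tild Θ t (f (-t))) :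
    MemH2 F := by
  intro n hn
  have hI : fourierCoeff (⇑F) n
      = ∫ t, fourier (n + 1) t • (adjoint (Θ t)) (f t) ∂haarCircle2pi := by
    rw [fourierCoeff_congr_ae hF]
    unfold fourierCoeff
    refine integral_comp_neg' (G := fun s => fourier (n + 1) s • (adjoint (Θ s)) (f s))
      fun t => ?_
    show fourier (-n) t • fourier (-1) t • tild Θ t (f (-t))
        = fourier (n + 1) (-t) • (adjoint (Θ (-t))) (f (-t))
    rw [smul_smul, ← fourier_add, fourier_neg_arg, tild]
    norm_num
    rw [mul_comm]
  rw [hI]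
  -- measurability and integrability of the integrand
  have hmem : MemLp (fun t => (adjoint (Θ t)) (f t)) 2 haarCircle2pi := by
    refine memLp_apply_unitary (aesm_adjoint hΘ.meas) ?_ (MeasureTheory.Lp.memLp f)
    filter_upwards [hΘ.unit] with t ht using adjoint_mem_unitary ht
  have hint : Integrable (fun t => fourier (n + 1) t • (adjoint (Θ t)) (f t)) haarCircle2pi :=
    (hmem.integrable (by norm_num)).smul_of_top_right (memLp_fourier (n + 1))
  refine ext_inner_left ℂ fun v => ?_
  rw [inner_zero_right, ← integral_inner hint]
  have hstep : ∀ t : Circle2pi,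
      (⟪v, fourier (n + 1) t • (adjoint (Θ t)) (f t)⟫ : ℂ)
        = (starRingEnd ℂ) (⟪f t, Θ t (fourier (-(n + 1)) t • v)⟫ : ℂ) := by
    intro t
    rw [inner_smul_right, adjoint_inner_right, inner_conj_symm, (Θ t).map_smul,
      inner_smul_left, fourier_neg, starRingEnd_self_apply]
  simp_rw [hstep]
  rw [integral_conj]
  have hgoal : ∫ t, (⟪f t, Θ t (fourier (-(n + 1)) t • v)⟫ : ℂ) ∂haarCircle2pi = 0 := by
    have hco := mono_coe (-(n + 1)) v
    have : ∫ t, (⟪f t, Θ t (fourier (-(n + 1)) t • v)⟫ : ℂ) ∂haarCircle2pi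
        = ∫ t, (⟪f t, Θ t ((mono (-(n + 1)) v) t)⟫ : ℂ) ∂haarCircle2pi := by
      refine integral_congr_ae ?_
      filter_upwards [hco] with t ht
      rw [ht]
    rw [this]
    exact hf.2 (mono (-(n + 1)) v) (memH2_mono (by omega) v)
  rw [hgoal, map_zero]

lemma orth_tau (hΘ : IsInner Θ) {f F : Lp E 2 haarCircle2pi} (hf : MemK Θ f)
    (hF : (⇑F) =ᵐ[haarCircle2pi] fun t => fourier (-1) t • tild Θ t (f (-t))) :
    ∀ g : Lp E 2 haarCircle2pi, MemH2 g →
      ∫ t, ⟪F t, tild Θ t (g t)⟫ ∂haarCircle2pi = 0 := by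
  intro g hg
  have hmem : MemLp (fun t : Circle2pi => fourier (-1) t • g (-t)) 2 haarCircle2pi := by
    have h1 : MemLp (fun t : Circle2pi => g (-t)) 2 haarCircle2pi :=
      memLp_comp_neg (MeasureTheory.Lp.memLp g)
    exact h1.smul (p := ⊤) (memLp_fourier (-1))
  set h : Lp E 2 haarCircle2pi := hmem.toLp _ with hh
  have hhc : (⇑h) =ᵐ[haarCircle2pi] fun t => fourier (-1) t • g (-t) := hmem.coeFn_toLp
  have hcoeff : ∀ n : ℤ, fourierCoeff (⇑h) n = fourierCoeff (⇑g) (-(n + 1)) := by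
    intro n
    rw [fourierCoeff_congr_ae hhc]
    unfold fourierCoeff
    simp only [neg_neg]
    refine integral_comp_neg' (G := fun s => fourier (n + 1) s • g s) fun t => ?_
    show fourier (-n) t • fourier (-1) t • g (-t) = fourier (n + 1) (-t) • g (-t)
    rw [smul_smul, ← fourier_add, fourier_neg_arg]
    norm_num
    rw [mul_comm]
  have step : ∫ t, ⟪F t, tild Θ t (g t)⟫ ∂haarCircle2pi
      = ∫ t, ⟪f t, h t⟫ ∂haarCircle2pi := by
    have e1 : ∫ t, ⟪F t, tild Θ t (g t)⟫ ∂haarCircle2pi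
        = ∫ t, (fourier 1 t * ⟪f (-t), g t⟫ : ℂ) ∂haarCircle2pi := by
      refine integral_congr_ae ?_
      filter_upwards [hF, ae_unitary_neg hΘ] with t ht hu
      rw [ht]
      show (⟪fourier (-1) t • adjoint (Θ (-t)) (f (-t)), adjoint (Θ (-t)) (g t)⟫ : ℂ)
          = fourier 1 t * ⟪f (-t), g t⟫
      rw [inner_smul_left, ContinuousLinearMap.inner_map_map_of_mem_unitary
        (adjoint_mem_unitary hu), ← fourier_neg]
      norm_num
    have e2 : ∫ t, (fourier 1 t * ⟪f (-t), g t⟫ : ℂ) ∂haarCircle2pi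
        = ∫ t, (fourier (-1) t * ⟪f t, g (-t)⟫ : ℂ) ∂haarCircle2pi := by
      refine (integral_comp_neg' (G := fun s => fourier 1 s * ⟪f (-s), g s⟫) fun t => ?_).symm
      show fourier (-1) t * ⟪f t, g (-t)⟫ = fourier 1 (-t) * ⟪f (-(-t)), g (-t)⟫
      rw [fourier_neg_arg, neg_neg]
    have e3 : ∫ t, (fourier (-1) t * ⟪f t, g (-t)⟫ : ℂ) ∂haarCircle2pi
        = ∫ t, ⟪f t, h t⟫ ∂haarCircle2pi := by
      refine integral_congr_ae ?_
      filter_upwards [hhc] with t ht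
      rw [ht, inner_smul_right]
    rw [e1, e2, e3]
  rw [step]
  refine parseval_orth fun n => ?_
  rcases lt_or_ge n 0 with hn | hn
  · exact Or.inl (hf.1 n hn)
  · exact Or.inr ((hcoeff n).trans (hg (-(n + 1)) (by omega)))

lemma memK_tau (hΘ : IsInner Θ) {f F : Lp E 2 haarCircle2pi} (hf : MemK Θ f)
    (hF : (⇑F) =ᵐ[haarCircle2pi] fun t => fourier (-1) t • tild Θ t (f (-t))) :
    MemK (tild Θ) F :=
  ⟨coeff_vanish hΘ hf hF, orth_tau hΘ hf hF⟩

lemma isTau_adjoint (hΘ : IsInner Θ) {τ : Lp E 2 haarCircle2pi →L[ℂ] Lp E 2 haarCircle2pi}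
    (hτ : IsTau Θ τ) : IsTau (tild Θ) (adjoint τ) := by
  intro h
  have hform : (fun t => fourier (-1) t • (adjoint (tild Θ (-t))) (h (-t)))
      = fun t => fourier (-1) t • Θ t (h (-t)) := by
    funext t
    rw [tild, neg_neg, adjoint_adjoint]
  rw [hform]
  have hmem : MemLp (fun t : Circle2pi => fourier (-1) t • Θ t (h (-t))) 2 haarCircle2pi := by
    have h1 := memLp_apply_unitary hΘ.meas hΘ.unit
      (memLp_comp_neg (MeasureTheory.Lp.memLp h))
    exact h1.smul (p := ⊤) (memLp_fourier (-1))
  have hHc : ⇑(hmem.toLp _) =ᵐ[haarCircle2pi]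
      fun t : Circle2pi => fourier (-1) t • Θ t (h (-t)) := hmem.coeFn_toLp
  have key : adjoint τ h = hmem.toLp _ := by
    refine ext_inner_right ℂ fun w => ?_
    rw [adjoint_inner_left, MeasureTheory.L2.inner_def, MeasureTheory.L2.inner_def]
    have e1 : ∫ t, ⟪h t, (τ w) t⟫ ∂haarCircle2pi
        = ∫ t, (fourier (-1) t * ⟪Θ (-t) (h t), w (-t)⟫ : ℂ) ∂haarCircle2pi := by
      refine integral_congr_ae ?_
      filter_upwards [hτ w] with t ht
      rw [ht]
      show (⟪h t, fourier (-1) t • (adjoint (Θ (-t))) (w (-t))⟫ : ℂ) = _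
      rw [inner_smul_right, adjoint_inner_right]
    have e2 : ∫ t, (fourier (-1) t * ⟪Θ (-t) (h t), w (-t)⟫ : ℂ) ∂haarCircle2pi
        = ∫ t, (fourier 1 t * ⟪Θ t (h (-t)), w t⟫ : ℂ) ∂haarCircle2pi := by
      refine (integral_comp_neg'
        (G := fun s => fourier (-1) s * ⟪Θ (-s) (h s), w (-s)⟫) fun t => ?_).symm
      show fourier 1 t * ⟪Θ t (h (-t)), w t⟫
          = fourier (-1) (-t) * ⟪Θ (-(-t)) (h (-t)), w (-(-t))⟫
      rw [fourier_neg_arg]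
      simp only [neg_neg]
    have e3 : ∫ t, (fourier 1 t * ⟪Θ t (h (-t)), w t⟫ : ℂ) ∂haarCircle2pi
        = ∫ t, ⟪(hmem.toLp _) t, w t⟫ ∂haarCircle2pi := by
      refine integral_congr_ae ?_
      filter_upwards [hHc] with t ht
      rw [ht, inner_smul_left, fourier_neg, starRingEnd_self_apply]
    rw [e1, e2, e3]
  have : ⇑(adjoint τ h) =ᵐ[haarCircle2pi] ⇑(hmem.toLp _) := by
    rw [key]
  exact this.trans hHc

end TTAux

open TTAux

/-- Let `Θ` be inner, `Θ̃(z) = Θ(z̄)*`, and `τ` the unitary operator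
`(τ f)(e^{it}) = e^{-it} Θ(e^{-it})* f(e^{-it})` mapping `K_Θ` onto `K_Θ̃`. Then
`τ* T_Θ̃ τ ⊆ T_Θ`: for every bounded operator `B ∈ T_Θ̃`, the operator `τ* B τ` on
`K_Θ` belongs to `T_Θ`. -/
theorem tau_adj_TT_tau_subset (Θ : Circle2pi → (E →L[ℂ] E)) (hΘ : IsInner Θ)
    (τ : Lp E 2 haarCircle2pi →L[ℂ] Lp E 2 haarCircle2pi) (hτ : IsTau Θ τ) :
    ∀ B : Lp E 2 haarCircle2pi →L[ℂ] Lp E 2 haarCircle2pi,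
      (∀ f, MemK (tild Θ) f → MemK (tild Θ) (B f)) → MemTT (tild Θ) B →
      MemTT Θ ((adjoint τ).comp (B.comp τ)) := by
  classical
  intro B hB hBTT
  obtain ⟨Ψ, hΨ2, hΨ⟩ := hBTT
  refine ⟨fun t => (Θ t) ∘L ((Ψ (-t)) ∘L adjoint (Θ t)), ?_, ?_⟩
  · -- the symbol is in `L²`
    have hΨneg : MemLp (fun t : Circle2pi => Ψ (-t)) 2 haarCircle2pi :=
      memLp_comp_neg hΨ2
    have hmeas : AEStronglyMeasurable
        (fun t => (Θ t) ∘L ((Ψ (-t)) ∘L adjoint (Θ t))) haarCircle2pi := by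
      have h1 : AEStronglyMeasurable (fun t => (Ψ (-t)) ∘L adjoint (Θ t)) haarCircle2pi :=
        (ContinuousLinearMap.compL ℂ E E E).aestronglyMeasurable_comp₂ hΨneg.1
          (aesm_adjoint hΘ.meas)
      exact (ContinuousLinearMap.compL ℂ E E E).aestronglyMeasurable_comp₂ hΘ.meas h1
    refine MemLp.of_le hΨneg hmeas ?_
    filter_upwards [hΘ.unit] with t ht
    have hn1 : ‖Θ t‖ ≤ 1 :=
      ContinuousLinearMap.opNorm_le_bound _ zero_le_one fun x => by
        rw [ContinuousLinearMap.norm_map_of_mem_unitary ht, one_mul]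
    have hn2 : ‖adjoint (Θ t)‖ ≤ 1 :=
      ContinuousLinearMap.opNorm_le_bound _ zero_le_one fun x => by
        rw [ContinuousLinearMap.norm_map_of_mem_unitary (adjoint_mem_unitary ht), one_mul]
    calc ‖(Θ t) ∘L ((Ψ (-t)) ∘L adjoint (Θ t))‖
        ≤ ‖Θ t‖ * ‖(Ψ (-t)) ∘L adjoint (Θ t)‖ := ContinuousLinearMap.opNorm_comp_le _ _
      _ ≤ ‖Θ t‖ * (‖Ψ (-t)‖ * ‖adjoint (Θ t)‖) := by
          have := ContinuousLinearMap.opNorm_comp_le (Ψ (-t)) (adjoint (Θ t))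
          exact mul_le_mul_of_nonneg_left this (norm_nonneg _)
      _ ≤ 1 * (‖Ψ (-t)‖ * 1) := by gcongr
      _ = ‖Ψ (-t)‖ := by ring
  · intro f hf hfb
    have hτf := hτ f
    have hτfK : MemK (tild Θ) (τ f) := memK_tau hΘ hf hτf
    have hτfb : MemLp (⇑(τ f)) ⊤ haarCircle2pi := by
      have h2 : MemLp (fun t : Circle2pi => (adjoint (Θ (-t))) (f (-t))) ⊤ haarCircle2pi := by
        refine memLp_apply_unitary (aesm_adjoint (aesm_comp_neg hΘ.meas)) ?_
          (memLp_comp_neg hfb)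
        filter_upwards [ae_unitary_neg hΘ] with t ht using adjoint_mem_unitary ht
      exact MemLp.ae_eq hτf.symm (h2.smul (p := ⊤) (memLp_fourier (-1)))
    obtain ⟨hBK0, hBform⟩ := hΨ (τ f) hτfK hτfb
    have hBK' : MemK (tild Θ) (B (τ f)) := hB _ hτfK
    have hAform := isTau_adjoint hΘ hτ (B (τ f))
    constructor
    · have h2 := memK_tau (isInner_tild hΘ) hBK' hAform
      rw [tild_tild] at h2
      exact h2
    · intro g hg
      have hτgK : MemK (tild Θ) (τ g) := memK_tau hΘ hg (hτ g)
      have e0 : (⟪((adjoint τ).comp (B.comp τ)) f, g⟫ : ℂ) = ⟪B (τ f), τ g⟫ := by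
        simp only [ContinuousLinearMap.comp_apply]
        rw [adjoint_inner_left]
      rw [e0, hBform (τ g) hτgK]
      have e1 : ∫ t, ⟪Ψ t ((τ f) t), (τ g) t⟫ ∂haarCircle2pi
          = ∫ t, ⟪Θ (-t) (Ψ t ((adjoint (Θ (-t))) (f (-t)))), g (-t)⟫ ∂haarCircle2pi := by
        refine integral_congr_ae ?_
        filter_upwards [hτ f, hτ g] with t h1 h2
        rw [h1, h2]
        show (⟪Ψ t (fourier (-1) t • (adjoint (Θ (-t))) (f (-t))),
            fourier (-1) t • (adjoint (Θ (-t))) (g (-t))⟫ : ℂ) = _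
        rw [(Ψ t).map_smul, inner_smul_left, inner_smul_right, ← mul_assoc,
          conj_fourier_mul_self, one_mul, adjoint_inner_right]
      have e2 : ∫ t, ⟪Θ (-t) (Ψ t ((adjoint (Θ (-t))) (f (-t)))), g (-t)⟫ ∂haarCircle2pi
          = ∫ t, ⟪Θ t (Ψ (-t) ((adjoint (Θ t)) (f t))), g t⟫ ∂haarCircle2pi := by
        refine integral_comp_neg'
          (G := fun s => (⟪Θ s (Ψ (-s) ((adjoint (Θ s)) (f s))), g s⟫ : ℂ)) fun t => ?_
        simp only [neg_neg]
      rw [e1, e2]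
      refine integral_congr_ae (Filter.Eventually.of_forall fun t => ?_)
      simp [ContinuousLinearMap.comp_apply]
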